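/- Let D be the unique ℚ-linear derivation of the polynomial ring ℚ[x_0, x_1, x_2, …] (in countably many variables) satisfying D(x_i) = x_0 x_{i+1} for every i ≥ 0. Then for every n ≥ 0, D^n(x_0) = Σ_T Π_{v=0}^{n} x_{deg_T(v)}, where the sum runs over all increasing trees T on [n] and deg_T(v) is the degree (number of children) of the vertex v in T; equivalently, D^n(x_0) = Σ_T x_0^{m_0(T)} x_1^{m_1(T)} x_2^{m_2(T)} ⋯, where m_i(T) is the number of vertices of T of degree i. -/

import Mathlib

open MvPolynomial

/-- `deg p v` is the number of children of vertex `v` in the increasing tree on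
`{0,1,…,n}` encoded by the parent function `p` (vertex `i+1` has parent `p i`). -/
def deg {n : ℕ} (p : Fin n → Fin (n + 1)) (v : Fin (n + 1)) : ℕ :=
  (Finset.univ.filter fun i => p i = v).card

/-- The parent function encodes an increasing tree: each vertex's parent has a smaller
label. -/
def IsIncreasingTree {n : ℕ} (p : Fin n → Fin (n + 1)) : Prop :=
  ∀ i : Fin n, (p i : ℕ) ≤ (i : ℕ)

instance {n : ℕ} : DecidablePred (fun p : Fin n → Fin (n + 1) => IsIncreasingTree p) :=
  fun p => inferInstanceAs (Decidable (∀ i : Fin n, (p i : ℕ) ≤ (i : ℕ)))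

lemma deriv_prod (D : Derivation ℚ (MvPolynomial ℕ ℚ) (MvPolynomial ℕ ℚ)) {α : Type*}
    [DecidableEq α] (s : Finset α) (f : α → MvPolynomial ℕ ℚ) :
    D (∏ i ∈ s, f i) = ∑ i ∈ s, (∏ j ∈ s.erase i, f j) * D (f i) := by
  induction s using Finset.induction with
  | empty => simp
  | insert _ _ hx ih =>
    rename_i a s
    rw [Finset.prod_insert hx, D.leibniz, smul_eq_mul, smul_eq_mul, ih, Finset.sum_insert hx,
      Finset.erase_insert hx, Finset.mul_sum]
    rw [add_comm]
    congr 1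
    apply Finset.sum_congr rfl
    intro i hi
    rw [Finset.erase_insert_of_ne (by rintro rfl; exact hx hi),
      Finset.prod_insert (fun hh => hx (Finset.erase_subset _ _ hh)), mul_assoc]

/-- Attach a new last vertex with parent `v` to the tree `p`. -/
def attach {n : ℕ} (p : Fin n → Fin (n + 1)) (v : Fin (n + 1)) :
    Fin (n + 1) → Fin (n + 2) :=
  Fin.lastCases v.castSucc (fun j => (p j).castSucc)

lemma attach_castSucc {n : ℕ} (p : Fin n → Fin (n + 1)) (v : Fin (n + 1)) (j : Fin n) :
    attach p v j.castSucc = (p j).castSucc := Fin.lastCases_castSucc ..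

lemma attach_last {n : ℕ} (p : Fin n → Fin (n + 1)) (v : Fin (n + 1)) :
    attach p v (Fin.last n) = v.castSucc := Fin.lastCases_last ..

lemma deg_eq_sum {n : ℕ} (p : Fin n → Fin (n + 1)) (v : Fin (n + 1)) :
    deg p v = ∑ i : Fin n, if p i = v then 1 else 0 := by
  rw [deg, Finset.card_filter]

lemma deg_attach_last {n : ℕ} (p : Fin n → Fin (n + 1)) (v : Fin (n + 1)) :
    deg (attach p v) (Fin.last (n + 1)) = 0 := by
  rw [deg_eq_sum, Fin.sum_univ_castSucc]
  simp [attach_castSucc, attach_last, Fin.castSucc_lt_last, (Fin.castSucc_lt_last _).ne]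

lemma deg_attach_castSucc {n : ℕ} (p : Fin n → Fin (n + 1)) (v u : Fin (n + 1)) :
    deg (attach p v) u.castSucc = deg p u + (if v = u then 1 else 0) := by
  rw [deg_eq_sum, deg_eq_sum, Fin.sum_univ_castSucc]
  simp [attach_castSucc, attach_last, Fin.castSucc_inj]

lemma attach_increasing {n : ℕ} (p : Fin n → Fin (n + 1)) (hp : IsIncreasingTree p)
    (v : Fin (n + 1)) : IsIncreasingTree (attach p v) := by
  intro i
  induction i using Fin.lastCases with
  | last => rw [attach_last]; simpa using v.is_le
  | cast j => rw [attach_castSucc]; simpa using hp j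

theorem stmt17
    (D : Derivation ℚ (MvPolynomial ℕ ℚ) (MvPolynomial ℕ ℚ))
    (h : ∀ i : ℕ, D (X i) = X 0 * X (i + 1)) (n : ℕ) :
    (⇑D)^[n] (X 0) =
      ∑ p ∈ Finset.univ.filter (fun p : Fin n → Fin (n + 1) => IsIncreasingTree p),
        ∏ v : Fin (n + 1), X (deg p v) := by
  induction n with
  | zero =>
    have h1 : (Finset.univ.filter (fun p : Fin 0 → Fin 1 => IsIncreasingTree p))
        = {fun i => i.elim0} := by
      apply Finset.eq_singleton_iff_unique_mem.mpr
      refine ⟨?_, fun p _ => funext fun i => i.elim0⟩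
      · simp only [Finset.mem_filter, Finset.mem_univ, true_and]
        intro i; exact i.elim0
    rw [h1, Finset.sum_singleton]
    simp [deg, Finset.filter_eq_empty_iff]
  | succ n ih =>
    rw [Function.iterate_succ_apply', ih, map_sum]
    have key : ∀ p : Fin n → Fin (n + 1), IsIncreasingTree p →
        D (∏ v : Fin (n + 1), X (deg p v)) =
        ∑ v : Fin (n + 1), ∏ w : Fin (n + 2), X (deg (attach p v) w) := by
      intro p hp
      rw [deriv_prod]
      apply Finset.sum_congr rfl
      intro v _
      rw [h, Fin.prod_univ_castSucc, deg_attach_last]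
      have : ∀ u : Fin (n + 1), deg (attach p v) u.castSucc =
          if v = u then deg p u + 1 else deg p u := by
        intro u; rw [deg_attach_castSucc]; split <;> simp
      calc (∏ j ∈ Finset.univ.erase v, X (deg p j)) * (X 0 * X (deg p v + 1))
          = (X (deg p v + 1) * ∏ j ∈ Finset.univ.erase v, X (deg p j)) * X 0 := by ring
        _ = (∏ u : Fin (n + 1), X (deg (attach p v) u.castSucc)) * X (0 : ℕ) := by
            congr 1
            rw [← Finset.mul_prod_erase Finset.univ _ (Finset.mem_univ v)]
            rw [this v, if_pos rfl]
            congr 1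
            apply Finset.prod_congr rfl
            intro j hj
            rw [this j, if_neg (Finset.ne_of_mem_erase hj).symm]
    rw [Finset.sum_congr rfl (fun p hp => key p (Finset.mem_filter.mp hp).2)]
    -- now reindex
    rw [← Finset.sum_product']
    apply Finset.sum_nbij' (i := fun pv => attach pv.1 pv.2)
      (j := fun q => (fun j : Fin n => (⟨min (q j.castSucc).val n, by omega⟩ : Fin (n+1)),
        (⟨min (q (Fin.last n)).val n, by omega⟩ : Fin (n+1))))
    · rintro ⟨p, v⟩ hpv
      simp only [Finset.mem_product, Finset.mem_filter, Finset.mem_univ, true_and] at hpv ⊢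
      exact attach_increasing p hpv.1 v
    · intro q hq
      simp only [Finset.mem_filter, Finset.mem_univ, true_and] at hq
      simp only [Finset.mem_product, Finset.mem_filter, Finset.mem_univ, true_and, and_true]
      intro j
      have := hq j.castSucc
      simp only [Fin.coe_castSucc] at this
      simp only []
      omega
    · rintro ⟨p, v⟩ _
      have hpj : ∀ j : Fin n, (p j : ℕ) ≤ n := fun j => (p j).is_le
      ext
      · rename_i j
        simp only [attach_castSucc]
        simp [Fin.ext_iff, Nat.min_eq_left (hpj _)]
      · simp [attach_last, Fin.ext_iff, Nat.min_eq_left v.is_le]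
    · intro q hq
      simp only [Finset.mem_filter, Finset.mem_univ, true_and] at hq
      funext i
      induction i using Fin.lastCases with
      | last =>
        have := hq (Fin.last n)
        rw [attach_last]
        simp only [Fin.coe_castSucc, Fin.val_last] at this ⊢
        exact Fin.ext (by simp [Nat.min_eq_left this])
      | cast j =>
        have := hq j.castSucc
        simp only [Fin.coe_castSucc] at this
        rw [attach_castSucc]
        exact Fin.ext (by simp; omega)
    · rintro ⟨p, v⟩ _
      rfl
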